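/- Let v ∈ S_n. Then the number of isolated vertices of the graph whose edges are v(j) → i for (i,j) ∈ D°(v) equals the number of indices i ∈ [n] with v(i) = n − i + 1 such that neither row n−i+1 nor column i meets D°(v); i.e. #{i ∈ [n] : v(i)=n−i+1, ∀j: (j,i) ∉ D°(v) and (n−i+1,j) ∉ D°(v)}. -/

import Mathlib

/-- Membership `(i,j) ∈ D°(v)`: `v(j) < i` and `v⁻¹(i) > j`. -/
def InOppRothe {n : ℕ} (v : Equiv.Perm (Fin n)) (i j : Fin n) : Prop :=
  v j < i ∧ j < v.symm i

instance {n : ℕ} (v : Equiv.Perm (Fin n)) (i j : Fin n) :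
    Decidable (InOppRothe v i j) :=
  inferInstanceAs (Decidable (v j < i ∧ j < v.symm i))

lemma key_iff {n : ℕ} (v : Equiv.Perm (Fin n)) (i : Fin n) :
    (∀ p q : Fin n, InOppRothe v p q → v i ≠ v q ∧ v i ≠ p) ↔
      (v i = i.rev ∧ ∀ j : Fin n, ¬ InOppRothe v j i ∧ ¬ InOppRothe v i.rev j) := by
  constructor
  · intro P
    have col : ∀ p : Fin n, ¬ InOppRothe v p i := by
      intro p hp
      exact (P p i hp).1 rfl
    have row : ∀ q : Fin n, ¬ InOppRothe v (v i) q := by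
      intro q hq
      exact (P (v i) q hq).2 rfl
    -- row/column emptiness forces v i = i.rev
    have h1 : ∀ p : Fin n, v i < p → v.symm p < i := by
      intro p hp
      have := col p
      unfold InOppRothe at this
      push_neg at this
      have hle : v.symm p ≤ i := this hp
      refine lt_of_le_of_ne hle (fun h => ?_)
      have hpvi : p = v i := by
        have := congrArg v h
        simpa using this
      exact (ne_of_gt hp) hpvi
    have h2 : ∀ q : Fin n, q < i → v i < v q := by
      intro q hq
      have := row q
      unfold InOppRothe at this
      push_neg at this
      simp only [Equiv.symm_apply_apply] at this
      have hle : v i ≤ v q := le_of_not_gt (fun h => absurd hq (not_lt_of_ge (this h)))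
      refine lt_of_le_of_ne hle (fun h => ?_)
      exact absurd (v.injective h) (ne_of_lt hq).symm
    have c1 : (Finset.Iio i).card ≤ (Finset.Ioi (v i)).card := by
      apply Finset.card_le_card_of_injOn v
      · intro q hq; simp only [Finset.mem_coe, Finset.mem_Iio] at hq; simp [h2 q hq]
      · exact v.injective.injOn
    have c2 : (Finset.Ioi (v i)).card ≤ (Finset.Iio i).card := by
      apply Finset.card_le_card_of_injOn v.symm
      · intro p hp; simp only [Finset.mem_coe, Finset.mem_Ioi] at hp; simp [h1 p hp]
      · exact v.symm.injective.injOn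
    have hcard : (i : ℕ) = n - 1 - (v i : ℕ) := by
      rw [Fin.card_Iio, Fin.card_Ioi] at c1 c2
      omega
    have hrev : v i = i.rev := by
      apply Fin.ext
      rw [Fin.val_rev]
      have hi : (i : ℕ) < n := i.isLt
      have hvi : ((v i : Fin n) : ℕ) < n := (v i).isLt
      omega
    refine ⟨hrev, fun j => ⟨col j, ?_⟩⟩
    rw [← hrev]; exact row j
  · rintro ⟨hrev, H⟩ p q hpq
    constructor
    · intro h
      have : i = q := v.injective h
      exact (H p).1 (this ▸ hpq)
    · intro h
      have : InOppRothe v i.rev q := by rw [← hrev, h]; exact hpq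
      exact (H q).2 this

/-- The number of isolated vertices of the graph with an edge `v(j) → i` for each
`(i,j) ∈ D°(v)` equals the number of `1`s on the antidiagonal of `v` (positions `i`
with `v(i) = n − i + 1`, i.e. `v i = i.rev` in 0-indexed terms) whose row and column
do not meet `D°(v)`. -/
theorem isolated_vertices_count (n : ℕ) (v : Equiv.Perm (Fin n)) :
    (Finset.univ.filter fun a : Fin n =>
        ∀ i j : Fin n, InOppRothe v i j → a ≠ v j ∧ a ≠ i).card
      = (Finset.univ.filter fun i : Fin n =>
          v i = i.rev ∧ ∀ j : Fin n, ¬ InOppRothe v j i ∧ ¬ InOppRothe v i.rev j).card := by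
  have hmap : (Finset.univ.filter fun a : Fin n =>
        ∀ i j : Fin n, InOppRothe v i j → a ≠ v j ∧ a ≠ i).map
          (v.symm : Fin n ≃ Fin n).toEmbedding
      = (Finset.univ.filter fun i : Fin n =>
          v i = i.rev ∧ ∀ j : Fin n, ¬ InOppRothe v j i ∧ ¬ InOppRothe v i.rev j) := by
    ext i
    rw [Finset.mem_map_equiv]
    simp only [Finset.mem_filter, Finset.mem_univ, true_and, Equiv.symm_symm]
    exact key_iff v i
  rw [← hmap, Finset.card_map]
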